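/- Let 0 < s < t and c > 0. Then ∫₀^∞ (φ_{t-s}(c - x) − φ_{t-s}(c + x)) · (x t^{3/2} / (c s^{3/2})) · exp(-x²/(2s)) · exp(c²/(2t)) dx = 1. (Normalization of the Brownian meander transition density.) -/

import Mathlib

open Real MeasureTheory Set

/-- Centered Gaussian density with variance `σ`. -/
noncomputable def phi (σ x : ℝ) : ℝ := (Real.sqrt (2 * π * σ))⁻¹ * Real.exp (-x ^ 2 / (2 * σ))

lemma gauss_int (v a : ℝ) (hv : 0 < v) :
    Integrable (fun x : ℝ => Real.exp (-(x - a) ^ 2 / (2 * v))) := by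
  have h := (integrable_exp_neg_mul_sq (b := (2 * v)⁻¹) (by positivity)).comp_sub_right a
  convert h using 2 with x
  ring_nf

lemma xgauss_int (v a : ℝ) (hv : 0 < v) :
    Integrable (fun x : ℝ => (x - a) * Real.exp (-(x - a) ^ 2 / (2 * v))) := by
  have h := (integrable_mul_exp_neg_mul_sq (b := (2 * v)⁻¹) (by positivity)).comp_sub_right a
  convert h using 2 with x
  ring_nf

lemma gauss_int_val (v a : ℝ) (hv : 0 < v) :
    ∫ x : ℝ, Real.exp (-(x - a) ^ 2 / (2 * v)) = Real.sqrt (2 * π * v) := by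
  rw [integral_sub_right_eq_self (μ := volume) (fun x => Real.exp (-x ^ 2 / (2 * v))) a]
  have h : ∀ x : ℝ, -x ^ 2 / (2 * v) = -((2 * v)⁻¹) * x ^ 2 := fun x => by ring
  simp_rw [h]
  rw [integral_gaussian]
  rw [eq_comm, show 2 * π * v = π / (2*v)⁻¹ by field_simp]

lemma gauss_deriv (v a : ℝ) (hv : 0 < v) (x : ℝ) :
    HasDerivAt (fun y : ℝ => -v * Real.exp (-(y - a) ^ 2 / (2 * v)))
      ((x - a) * Real.exp (-(x - a) ^ 2 / (2 * v))) x := by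
  have h1 : HasDerivAt (fun y : ℝ => -(y - a) ^ 2 / (2 * v)) (-(x - a) / v) x := by
    have h0 : HasDerivAt (fun y : ℝ => y - a) 1 x := (hasDerivAt_id x).sub_const a
    have h2 : HasDerivAt (fun y : ℝ => -(y - a) ^ 2 / (2 * v))
        (-(2 * (x - a) ^ 1 * 1) / (2 * v)) x := ((h0.pow 2).neg).div_const (2 * v)
    convert h2 using 1
    field_simp
  have := (h1.exp).const_mul (-v)
  convert this using 1
  · rfl
  · rfl
  have hv0 : v ≠ 0 := hv.ne'
  field_simp

lemma gauss_tendsto (v a : ℝ) (hv : 0 < v) :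
    Filter.Tendsto (fun x : ℝ => Real.exp (-(x - a) ^ 2 / (2 * v))) Filter.atTop (nhds 0) := by
  apply Real.tendsto_exp_atBot.comp
  have h1 : Filter.Tendsto (fun x : ℝ => (x - a) ^ 2 / (2 * v)) Filter.atTop Filter.atTop := by
    apply Filter.Tendsto.atTop_div_const (by positivity)
    have h2 := (Filter.tendsto_pow_atTop (two_ne_zero)).comp
      (Filter.tendsto_atTop_add_const_right Filter.atTop (-a) Filter.tendsto_id)
    exact h2.congr (fun x => by simp [sub_eq_add_neg])
  have h3 := Filter.tendsto_neg_atBot_iff.mpr h1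
  exact h3.congr (fun x => by ring)

lemma partA (v a : ℝ) (hv : 0 < v) :
    ∫ x in Ioi (0 : ℝ),
      ((x - a) * Real.exp (-(x - a) ^ 2 / (2 * v))
        - (x + a) * Real.exp (-(x + a) ^ 2 / (2 * v))) = 0 := by
  have hsub : ∀ x : ℝ, x + a = x - (-a) := fun x => by ring
  simp_rw [hsub]
  have hderiv : ∀ x ∈ Ici (0:ℝ), HasDerivAt
      (fun y : ℝ => -v * Real.exp (-(y - a) ^ 2 / (2 * v))
        - -v * Real.exp (-(y - (-a)) ^ 2 / (2 * v)))
      ((x - a) * Real.exp (-(x - a) ^ 2 / (2 * v))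
        - (x - (-a)) * Real.exp (-(x - (-a)) ^ 2 / (2 * v))) x :=
    fun x _ => (gauss_deriv v a hv x).sub (gauss_deriv v (-a) hv x)
  have hint : IntegrableOn (fun x : ℝ => (x - a) * Real.exp (-(x - a) ^ 2 / (2 * v))
      - (x - (-a)) * Real.exp (-(x - (-a)) ^ 2 / (2 * v))) (Ioi 0) :=
    ((xgauss_int v a hv).sub (xgauss_int v (-a) hv)).integrableOn
  have htend : Filter.Tendsto (fun y : ℝ => -v * Real.exp (-(y - a) ^ 2 / (2 * v))
      - -v * Real.exp (-(y - (-a)) ^ 2 / (2 * v))) Filter.atTop (nhds 0) := by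
    have := (((gauss_tendsto v a hv).const_mul (-v)).sub
      ((gauss_tendsto v (-a) hv).const_mul (-v)))
    simpa using this
  have h := integral_Ioi_of_hasDerivAt_of_tendsto' hderiv hint htend
  rw [h]
  have : ((0:ℝ) - a) ^ 2 = (0 - (-a)) ^ 2 := by ring
  rw [this]
  ring

lemma partB (v a : ℝ) (hv : 0 < v) :
    (∫ x in Ioi (0:ℝ), (Real.exp (-(x - a) ^ 2 / (2 * v)) + Real.exp (-(x + a) ^ 2 / (2 * v))))
      = Real.sqrt (2 * π * v) := by
  have hsub : ∀ x : ℝ, x + a = x - (-a) := fun x => by ring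
  simp_rw [hsub]
  rw [integral_add ((gauss_int v a hv).integrableOn) ((gauss_int v (-a) hv).integrableOn)]
  have h2 : (∫ x in Ioi (0:ℝ), Real.exp (-(x - -a) ^ 2 / (2 * v)))
      = ∫ x in Iic (0:ℝ), Real.exp (-(x - a) ^ 2 / (2 * v)) := by
    have h3 := integral_comp_neg_Ioi (0:ℝ) (fun y => Real.exp (-(y - a) ^ 2 / (2 * v)))
    simp only [neg_zero] at h3
    have h4 : ∀ x : ℝ, (x - -a) ^ 2 = (-x - a) ^ 2 := fun x => by ring
    simp_rw [h4]
    exact h3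
  rw [h2, add_comm, intervalIntegral.integral_Iic_add_Ioi ((gauss_int v a hv).integrableOn)
    ((gauss_int v a hv).integrableOn), gauss_int_val v a hv]

lemma gauss_int_plus (v a : ℝ) (hv : 0 < v) :
    Integrable (fun x : ℝ => Real.exp (-(x + a) ^ 2 / (2 * v))) := by
  simpa [sub_neg_eq_add] using gauss_int v (-a) hv

lemma xgauss_int_plus (v a : ℝ) (hv : 0 < v) :
    Integrable (fun x : ℝ => (x + a) * Real.exp (-(x + a) ^ 2 / (2 * v))) := by
  simpa [sub_neg_eq_add] using xgauss_int v (-a) hv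

theorem stmt7 (s t c : ℝ) (hs : 0 < s) (hst : s < t) (hc : 0 < c) :
    ∫ x in Ioi (0 : ℝ),
        (phi (t - s) (c - x) - phi (t - s) (c + x)) *
          (x * t ^ ((3 : ℝ) / 2) / (c * s ^ ((3 : ℝ) / 2))) *
          Real.exp (-x ^ 2 / (2 * s)) * Real.exp (c ^ 2 / (2 * t)) = 1 := by
  have ht : 0 < t := hs.trans hst
  have hu : 0 < t - s := by linarith
  have hv : 0 < (t - s) * s / t := by positivity
  have ha : 0 < c * s / t := by positivity
  set u := t - s with hu_def
  set v := (t - s) * s / t with hv_def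
  set a := c * s / t with ha_def
  set K := (Real.sqrt (2 * π * u))⁻¹ * (t ^ ((3 : ℝ) / 2) / (c * s ^ ((3 : ℝ) / 2))) with hK_def
  have key : ∀ x : ℝ,
      (phi u (c - x) - phi u (c + x)) *
          (x * t ^ ((3 : ℝ) / 2) / (c * s ^ ((3 : ℝ) / 2))) *
          Real.exp (-x ^ 2 / (2 * s)) * Real.exp (c ^ 2 / (2 * t))
      = K * ((x - a) * Real.exp (-(x - a) ^ 2 / (2 * v))
              - (x + a) * Real.exp (-(x + a) ^ 2 / (2 * v)))
        + (K * a) * (Real.exp (-(x - a) ^ 2 / (2 * v)) + Real.exp (-(x + a) ^ 2 / (2 * v))) := by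
    intro x
    have e1 : Real.exp (-(c - x) ^ 2 / (2 * u)) * Real.exp (-x ^ 2 / (2 * s)) *
        Real.exp (c ^ 2 / (2 * t)) = Real.exp (-(x - a) ^ 2 / (2 * v)) := by
      rw [← Real.exp_add, ← Real.exp_add]
      congr 1
      rw [hv_def, ha_def, hu_def]
      have hts : t - s ≠ 0 := (sub_pos.mpr hst).ne'
      field_simp
      ring
    have e2 : Real.exp (-(c + x) ^ 2 / (2 * u)) * Real.exp (-x ^ 2 / (2 * s)) *
        Real.exp (c ^ 2 / (2 * t)) = Real.exp (-(x + a) ^ 2 / (2 * v)) := by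
      rw [← Real.exp_add, ← Real.exp_add]
      congr 1
      rw [hv_def, ha_def, hu_def]
      have hts : t - s ≠ 0 := (sub_pos.mpr hst).ne'
      field_simp
      ring
    simp only [phi, hK_def]
    linear_combination ((Real.sqrt (2 * π * u))⁻¹ *
      (x * t ^ ((3 : ℝ) / 2) / (c * s ^ ((3 : ℝ) / 2)))) * (e1 - e2)
  rw [setIntegral_congr_fun measurableSet_Ioi (fun x _ => key x)]
  have i1 : IntegrableOn (fun x : ℝ => K * ((x - a) * Real.exp (-(x - a) ^ 2 / (2 * v))
      - (x + a) * Real.exp (-(x + a) ^ 2 / (2 * v)))) (Ioi 0) :=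
    (((xgauss_int v a hv).sub (xgauss_int_plus v a hv)).const_mul K).integrableOn
  have i2 : IntegrableOn (fun x : ℝ => (K * a) * (Real.exp (-(x - a) ^ 2 / (2 * v))
      + Real.exp (-(x + a) ^ 2 / (2 * v)))) (Ioi 0) :=
    (((gauss_int v a hv).add (gauss_int_plus v a hv)).const_mul (K * a)).integrableOn
  rw [integral_add i1 i2, integral_const_mul, integral_const_mul, partA v a hv, partB v a hv]
  rw [hK_def, hv_def, ha_def, hu_def]
  have hsqv : Real.sqrt (2 * π * ((t - s) * s / t))
      = Real.sqrt (2 * π * (t - s)) * (Real.sqrt s / Real.sqrt t) := by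
    rw [← Real.sqrt_div hs.le t, ← Real.sqrt_mul (by positivity : (0:ℝ) ≤ 2 * π * (t - s)) (s / t)]
    congr 1
    ring
  rw [hsqv]
  have h32s : s ^ ((3 : ℝ) / 2) = Real.sqrt s * s := by
    rw [show ((3:ℝ)/2) = (1:ℝ)/2 + 1 by norm_num, Real.rpow_add hs, Real.rpow_one,
      Real.sqrt_eq_rpow]
  have h32t : t ^ ((3 : ℝ) / 2) = Real.sqrt t * t := by
    rw [show ((3:ℝ)/2) = (1:ℝ)/2 + 1 by norm_num, Real.rpow_add ht, Real.rpow_one,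
      Real.sqrt_eq_rpow]
  rw [h32s, h32t]
  have h1 : Real.sqrt (2 * π * (t - s)) ≠ 0 := by positivity
  have h2 : Real.sqrt s ≠ 0 := by positivity
  have h3 : Real.sqrt t ≠ 0 := by positivity
  field_simp
  ring
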